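/- Let K be a number field of degree d over ℚ and let B ≥ 0 be a real number. Then the number of elements x ∈ 𝓞_K with house(x) ≤ B is at most (2B+1)^d. -/

import Mathlib

open NumberField Module

private lemma house_le_iff' {K : Type*} [Field K] [NumberField K] {x : K} {r : ℝ} :
    NumberField.house x ≤ r ↔ ∀ φ : K →+* ℂ, ‖φ x‖ ≤ r :=
  NumberField.canonicalEmbedding.norm_le_iff x r

private lemma one_le_house' {K : Type*} [Field K] [NumberField K]
    {x : K} (hx : IsIntegral ℤ x) (h : x ≠ 0) : 1 ≤ NumberField.house x := by
  by_contra hlt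
  push_neg at hlt
  set a : 𝓞 K := ⟨x, hx⟩ with ha
  have hax : (a : K) = x := rfl
  have ha0 : a ≠ 0 := by
    intro h0
    exact h (by rw [← hax, h0]; simp)
  have h1 : (1 : ℝ) ≤ |Algebra.norm ℚ (a : K)| := by
    rw [← Algebra.coe_norm_int, ← Int.cast_one, ← Int.cast_abs, Rat.cast_intCast, Int.cast_le]
    exact Int.one_le_abs (Algebra.norm_ne_zero_iff.mpr ha0)
  rw [← InfinitePlace.prod_eq_abs_norm] at h1
  have h2 : ∏ w : InfinitePlace K, w (a : K) ^ w.mult ≤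
      NumberField.house x ^ finrank ℚ K := by
    rw [← InfinitePlace.sum_mult_eq, ← Finset.prod_pow_eq_pow_sum]
    refine Finset.prod_le_prod (fun w _ => by positivity) (fun w _ => ?_)
    refine pow_le_pow_left₀ (apply_nonneg w _) ?_ _
    rw [hax, ← InfinitePlace.norm_embedding_eq]
    exact house_le_iff'.mp le_rfl _
  have h3 : NumberField.house x ^ finrank ℚ K < 1 :=
    pow_lt_one₀ (house_nonneg x) hlt Module.finrank_pos.ne'
  linarith

/-- a number field `K` of degree `d` over `ℚ` has at most `(2B+1)^d`
integers of house at most `B`. -/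
theorem card_ringOfIntegers_house_le
    (K : Type*) [Field K] [NumberField K] (B : ℝ) (hB : 0 ≤ B) :
    {x : K | IsIntegral ℤ x ∧ NumberField.house x ≤ B}.Finite ∧
      (Nat.card {x : K | IsIntegral ℤ x ∧ NumberField.house x ≤ B} : ℝ) ≤
        (2 * B + 1) ^ (finrank ℚ K) := by
  classical
  have hfin : {x : K | IsIntegral ℤ x ∧ NumberField.house x ≤ B}.Finite := by
    refine (NumberField.Embeddings.finite_of_norm_le K ℂ B).subset ?_
    exact fun x hx => ⟨hx.1, house_le_iff'.mp hx.2⟩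
  refine ⟨hfin, ?_⟩
  set n : ℕ := ⌊2 * B⌋₊ + 1 with hn
  have hn2B : 2 * B < n := by
    have := Nat.lt_floor_add_one (2 * B)
    rw [hn]
    push_cast
    linarith
  have hnle : (n : ℝ) ≤ 2 * B + 1 := by
    have := Nat.floor_le (by linarith : (0 : ℝ) ≤ 2 * B)
    rw [hn]
    push_cast
    linarith
  set I : Ideal (𝓞 K) := Ideal.span {(n : 𝓞 K)} with hI
  have hcard : Ideal.absNorm I = n ^ finrank ℚ K := by
    rw [hI]
    have hcast : ((n : ℤ) : 𝓞 K) = algebraMap ℤ (𝓞 K) (n : ℤ) := by simp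
    have : (n : 𝓞 K) = algebraMap ℤ (𝓞 K) (n : ℤ) := by push_cast [← hcast]; rfl
    rw [Ideal.absNorm_span_singleton, this,
      Algebra.norm_algebraMap_of_basis (NumberField.RingOfIntegers.basis K),
      ← Module.finrank_eq_card_chooseBasisIndex, NumberField.RingOfIntegers.rank,
      Int.natAbs_pow]
    simp
  have hquotfin : Finite (𝓞 K ⧸ I) := by
    rw [← Ideal.absNorm_ne_zero_iff, hcard]
    positivity
  have hqcard : Nat.card (𝓞 K ⧸ I) = n ^ finrank ℚ K := by
    rw [← hcard, Ideal.absNorm_apply, Submodule.cardQuot_apply]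
  set f : {x : K | IsIntegral ℤ x ∧ NumberField.house x ≤ B} → 𝓞 K ⧸ I :=
    fun x => Ideal.Quotient.mk I ⟨x.1, x.2.1⟩ with hf
  have hinj : Function.Injective f := by
    intro x y hxy
    have hmem : (⟨x.1, x.2.1⟩ - ⟨y.1, y.2.1⟩ : 𝓞 K) ∈ I := Ideal.Quotient.eq.mp hxy
    rw [hI, Ideal.mem_span_singleton] at hmem
    obtain ⟨z, hz⟩ := hmem
    have hzK : (x.1 : K) - y.1 = (n : K) * (z : K) := by
      have h := congrArg (algebraMap (𝓞 K) K) hz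
      exact (map_sub (algebraMap (𝓞 K) K) _ _).symm.trans (h.trans (by rw [map_mul, map_natCast]))
    by_cases hz0 : (z : K) = 0
    · have : (x.1 : K) = y.1 := by
        rw [hz0, mul_zero, sub_eq_zero] at hzK
        exact hzK
      exact Subtype.ext this
    · exfalso
      have hnR : (0 : ℝ) < n := by positivity
      have hub : ∀ φ : K →+* ℂ, ‖φ (z : K)‖ ≤ 2 * B / n := by
        intro φ
        rw [le_div_iff₀ hnR]
        have hφ : φ ((x.1 : K)) - φ (y.1) = (n : ℂ) * φ (z : K) := by
          rw [← map_sub, hzK, map_mul, map_natCast]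
        have hx' : ‖φ (x.1 : K)‖ ≤ B := house_le_iff'.mp x.2.2 φ
        have hy' : ‖φ (y.1 : K)‖ ≤ B := house_le_iff'.mp y.2.2 φ
        have hnorm : ‖φ (z : K)‖ * (n : ℝ) = ‖φ (x.1 : K) - φ (y.1 : K)‖ := by
          rw [hφ, norm_mul]
          simp [mul_comm]
        rw [hnorm]
        calc ‖φ (x.1 : K) - φ (y.1 : K)‖ ≤ ‖φ (x.1 : K)‖ + ‖φ (y.1 : K)‖ := norm_sub_le _ _
          _ ≤ 2 * B := by linarith
      have hhz : NumberField.house (z : K) ≤ 2 * B / n := house_le_iff'.mpr hub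
      have h1z : (1 : ℝ) ≤ NumberField.house (z : K) :=
        one_le_house' z.isIntegral_coe hz0
      have : 2 * B / (n : ℝ) < 1 := (div_lt_one hnR).mpr hn2B
      linarith
  have hle : Nat.card {x : K | IsIntegral ℤ x ∧ NumberField.house x ≤ B} ≤
      Nat.card (𝓞 K ⧸ I) := Nat.card_le_card_of_injective f hinj
  rw [hqcard] at hle
  calc (Nat.card {x : K | IsIntegral ℤ x ∧ NumberField.house x ≤ B} : ℝ)
      ≤ (n : ℝ) ^ finrank ℚ K := by exact_mod_cast hle
    _ ≤ (2 * B + 1) ^ finrank ℚ K := pow_le_pow_left₀ (by positivity) hnle _
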